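/- Let $f, g \in \hat{\mathcal{D}}([0,T],\mathbb{R})$ be càdlàg functions with $f$ monotone (nondecreasing or nonincreasing). Then for all $t \in [0,T]$ and $\delta > 0$, the M1 oscillation function satisfies $w_T(f + g, t, \delta) \leq v_T(g, t, \delta)$, where $w_T(h,t,\delta) = \sup_{0\vee(t-\delta) \leq t_1 < t_2 < t_3 \leq T\wedge(t+\delta)} \mathrm{dist}(h(t_2), [h(t_1), h(t_3)])$ and $v_T(g,t,\delta) = \sup_{0\vee(t-\delta) \leq t_1 \leq t_2 \leq T\wedge(t+\delta)} |g(t_1) - g(t_2)|$. -/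

import Mathlib

open Set Filter

/-- A càdlàg function on `[0,T]`. -/
def CadlagOn (f : ℝ → ℝ) (T : ℝ) : Prop :=
  (∀ t ∈ Set.Ico (0:ℝ) T, ContinuousWithinAt f (Set.Ici t) t) ∧
  (∀ t ∈ Set.Ioc (0:ℝ) T, ∃ l : ℝ, Filter.Tendsto f (nhdsWithin t (Set.Iio t)) (nhds l))

/-- Distance from `x` to the (non-ordered) segment between `a` and `b`. -/
noncomputable def segDist (x a b : ℝ) : ℝ :=
  sInf {d : ℝ | ∃ θ ∈ Set.Icc (0:ℝ) 1, d = |θ * a + (1 - θ) * b - x|}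

/-- The M1 oscillation function `w_T`. -/
noncomputable def wT (T : ℝ) (h : ℝ → ℝ) (t δ : ℝ) : ℝ :=
  sSup {d : ℝ | ∃ t1 t2 t3 : ℝ, max 0 (t - δ) ≤ t1 ∧ t1 < t2 ∧ t2 < t3 ∧
    t3 ≤ min T (t + δ) ∧ d = segDist (h t2) (h t1) (h t3)}

/-- The ordinary oscillation function `v_T`. -/
noncomputable def vT (T : ℝ) (g : ℝ → ℝ) (t δ : ℝ) : ℝ :=
  sSup {d : ℝ | ∃ t1 t2 : ℝ, max 0 (t - δ) ≤ t1 ∧ t1 ≤ t2 ∧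
    t2 ≤ min T (t + δ) ∧ d = |g t1 - g t2|}

lemma segDist_le_of_mem (x a b : ℝ) {θ : ℝ} (hθ : θ ∈ Set.Icc (0:ℝ) 1) :
    segDist x a b ≤ |θ * a + (1 - θ) * b - x| := by
  apply csInf_le
  · exact ⟨0, by rintro d ⟨θ', _, rfl⟩; positivity⟩
  · exact ⟨θ, hθ, rfl⟩

lemma exists_theta_of_le {a b c : ℝ} (h1 : a ≤ c) (h2 : c ≤ b) :
    ∃ θ ∈ Set.Icc (0:ℝ) 1, θ * a + (1 - θ) * b = c := by
  rcases eq_or_lt_of_le (h1.trans h2) with hab | hab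
  · exact ⟨1, ⟨zero_le_one, le_refl 1⟩, by nlinarith⟩
  · refine ⟨(b - c) / (b - a), ⟨div_nonneg (by linarith) (by linarith), ?_⟩, ?_⟩
    · rw [div_le_one (by linarith)]; linarith
    · have h := div_mul_cancel₀ (b - c) (sub_ne_zero.mpr (ne_of_gt hab))
      linear_combination -h

lemma exists_theta {a b c : ℝ} (h : (a ≤ c ∧ c ≤ b) ∨ (b ≤ c ∧ c ≤ a)) :
    ∃ θ ∈ Set.Icc (0:ℝ) 1, θ * a + (1 - θ) * b = c := by
  rcases h with ⟨h1, h2⟩ | ⟨h1, h2⟩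
  · exact exists_theta_of_le h1 h2
  · obtain ⟨θ, hθ, hc⟩ := exists_theta_of_le h1 h2
    exact ⟨1 - θ, ⟨by linarith [hθ.2], by linarith [hθ.1]⟩, by linarith [hc]⟩

lemma cadlag_bounded {g : ℝ → ℝ} {T : ℝ} (hT : 0 < T) (hg : CadlagOn g T) :
    ∃ M : ℝ, ∀ s ∈ Set.Icc (0:ℝ) T, |g s| ≤ M := by
  have key : ∀ s : ℝ, ∃ M : ℝ, s ∈ Set.Icc (0:ℝ) T →
      ∀ᶠ x in nhds s, x ∈ Set.Icc (0:ℝ) T → |g x| ≤ M := by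
    intro s
    by_cases hs : s ∈ Set.Icc (0:ℝ) T
    swap
    · exact ⟨0, fun h => absurd h hs⟩
    have hR : ∃ M1 : ℝ, ∀ᶠ x in nhdsWithin s (Set.Ici s), x ∈ Set.Icc (0:ℝ) T → |g x| ≤ M1 := by
      rcases lt_or_eq_of_le hs.2 with hsT | hsT
      · refine ⟨|g s| + 1, ?_⟩
        have hc := hg.1 s ⟨hs.1, hsT⟩
        have h1 : ∀ᶠ x in nhdsWithin s (Set.Ici s), g x ∈ Set.Icc (g s - 1) (g s + 1) :=
          hc (Icc_mem_nhds (by linarith) (by linarith))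
        filter_upwards [h1] with x hx _
        rw [abs_le] at *
        constructor <;> [linarith [hx.1, (abs_le.mp (le_refl |g s|)).1, neg_abs_le (g s)];
          linarith [hx.2, le_abs_self (g s)]]
      · refine ⟨|g T|, ?_⟩
        filter_upwards [self_mem_nhdsWithin] with x hx hx'
        have : x = T := le_antisymm hx'.2 (hsT ▸ hx)
        rw [this]
    have hL : ∃ M2 : ℝ, ∀ᶠ x in nhdsWithin s (Set.Iio s), x ∈ Set.Icc (0:ℝ) T → |g x| ≤ M2 := by
      rcases eq_or_lt_of_le hs.1 with hs0 | hs0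
      · refine ⟨0, ?_⟩
        filter_upwards [self_mem_nhdsWithin] with x hx hx'
        exact absurd (hx.trans_le (hs0 ▸ hx'.1)) (lt_irrefl x)
      · obtain ⟨l, hl⟩ := hg.2 s ⟨hs0, hs.2⟩
        refine ⟨|l| + 1, ?_⟩
        have h1 : ∀ᶠ x in nhdsWithin s (Set.Iio s), g x ∈ Set.Icc (l - 1) (l + 1) :=
          hl (Icc_mem_nhds (by linarith) (by linarith))
        filter_upwards [h1] with x hx _
        rw [abs_le] at *
        constructor <;> [linarith [hx.1, neg_abs_le l]; linarith [hx.2, le_abs_self l]]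
    obtain ⟨M1, hM1⟩ := hR
    obtain ⟨M2, hM2⟩ := hL
    refine ⟨max M1 M2, fun _ => ?_⟩
    rw [← nhdsLT_sup_nhdsGE s, eventually_sup]
    constructor
    · filter_upwards [hM2] with x hx hx'; exact (hx hx').trans (le_max_right _ _)
    · filter_upwards [hM1] with x hx hx'; exact (hx hx').trans (le_max_left _ _)
  choose Ms hMs using key
  have hcov : ∀ s ∈ Set.Icc (0:ℝ) T,
      {x : ℝ | x ∈ Set.Icc (0:ℝ) T → |g x| ≤ Ms s} ∈ nhds s := fun s hs => hMs s hs
  obtain ⟨F, hFmem, hFcov⟩ := (isCompact_Icc (a := (0:ℝ)) (b := T)).elim_nhds_subcover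
    (fun s => {x : ℝ | x ∈ Set.Icc (0:ℝ) T → |g x| ≤ Ms s}) hcov
  have h0 : (0:ℝ) ∈ Set.Icc (0:ℝ) T := ⟨le_refl 0, le_of_lt hT⟩
  obtain ⟨s0, hs0F, _⟩ := mem_iUnion₂.mp (hFcov h0)
  have hne : F.Nonempty := ⟨s0, hs0F⟩
  refine ⟨F.sup' hne Ms, fun x hx => ?_⟩
  obtain ⟨s, hsF, hxs⟩ := mem_iUnion₂.mp (hFcov hx)
  exact (hxs hx).trans (Finset.le_sup' Ms hsF)

/-- If `f` is monotone and càdlàg and `g` is càdlàg on `[0,T]`, then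
`w_T(f+g, t, δ) ≤ v_T(g, t, δ)` for every `t ∈ [0,T]` and `δ > 0`. -/
theorem wT_add_monotone_le_vT
    (T : ℝ) (hT : 0 < T) (f g : ℝ → ℝ)
    (hf : CadlagOn f T) (hg : CadlagOn g T)
    (hfmono : MonotoneOn f (Set.Icc 0 T) ∨ AntitoneOn f (Set.Icc 0 T)) :
    ∀ t ∈ Set.Icc (0:ℝ) T, ∀ δ > 0, wT T (f + g) t δ ≤ vT T g t δ := by
  intro t ht δ hδ
  set S : Set ℝ := {d : ℝ | ∃ t1 t2 : ℝ, max 0 (t - δ) ≤ t1 ∧ t1 ≤ t2 ∧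
    t2 ≤ min T (t + δ) ∧ d = |g t1 - g t2|} with hS
  have hvT : vT T g t δ = sSup S := rfl
  obtain ⟨M, hM⟩ := cadlag_bounded hT hg
  have hbdd : BddAbove S := by
    refine ⟨2 * M, ?_⟩
    rintro d ⟨t1, t2, h1, h12, h2, rfl⟩
    have ht1 : t1 ∈ Set.Icc (0:ℝ) T := ⟨(le_max_left 0 (t - δ)).trans h1,
      (h12.trans h2).trans (min_le_left T (t + δ))⟩
    have ht2 : t2 ∈ Set.Icc (0:ℝ) T := ⟨ht1.1.trans h12, h2.trans (min_le_left T (t + δ))⟩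
    calc |g t1 - g t2| ≤ |g t1| + |g t2| := abs_sub _ _
      _ ≤ M + M := add_le_add (hM t1 ht1) (hM t2 ht2)
      _ = 2 * M := by ring
  have hvnonneg : 0 ≤ vT T g t δ := by
    apply Real.sSup_nonneg
    rintro d ⟨t1, t2, _, _, _, rfl⟩
    exact abs_nonneg _
  apply Real.sSup_le _ hvnonneg
  rintro d ⟨t1, t2, t3, h1, h12, h23, h3, rfl⟩
  have ht1 : t1 ∈ Set.Icc (0:ℝ) T := ⟨(le_max_left 0 (t - δ)).trans h1,
    le_of_lt ((h12.trans h23).trans_le ((min_le_left T (t + δ)).trans' h3))⟩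
  have ht2 : t2 ∈ Set.Icc (0:ℝ) T := ⟨ht1.1.trans (le_of_lt h12),
    (le_of_lt h23).trans (h3.trans (min_le_left T (t + δ)))⟩
  have ht3 : t3 ∈ Set.Icc (0:ℝ) T := ⟨ht2.1.trans (le_of_lt h23),
    h3.trans (min_le_left T (t + δ))⟩
  have hv1 : |g t1 - g t2| ≤ vT T g t δ := by
    rw [hvT]
    exact le_csSup hbdd ⟨t1, t2, h1, le_of_lt h12, (le_of_lt h23).trans h3, rfl⟩
  have hv2 : |g t2 - g t3| ≤ vT T g t δ := by
    rw [hvT]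
    exact le_csSup hbdd ⟨t2, t3, h1.trans (le_of_lt h12), le_of_lt h23, h3, rfl⟩
  obtain ⟨θ, hθ, hcomb⟩ : ∃ θ ∈ Set.Icc (0:ℝ) 1, θ * f t1 + (1 - θ) * f t3 = f t2 := by
    apply exists_theta
    rcases hfmono with hmono | hanti
    · exact Or.inl ⟨hmono ht1 ht2 (le_of_lt h12), hmono ht2 ht3 (le_of_lt h23)⟩
    · exact Or.inr ⟨hanti ht2 ht3 (le_of_lt h23), hanti ht1 ht2 (le_of_lt h12)⟩
  calc segDist ((f + g) t2) ((f + g) t1) ((f + g) t3)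
      ≤ |θ * ((f + g) t1) + (1 - θ) * ((f + g) t3) - (f + g) t2| :=
        segDist_le_of_mem _ _ _ hθ
    _ = |θ * (g t1 - g t2) + (1 - θ) * (g t3 - g t2)| := by
        simp only [Pi.add_apply]
        congr 1
        linear_combination hcomb
    _ ≤ θ * |g t1 - g t2| + (1 - θ) * |g t3 - g t2| := by
        have e1 : |θ * (g t1 - g t2)| = θ * |g t1 - g t2| := by
          rw [abs_mul, abs_of_nonneg hθ.1]
        have e2 : |(1 - θ) * (g t3 - g t2)| = (1 - θ) * |g t3 - g t2| := by
          rw [abs_mul, abs_of_nonneg (by linarith [hθ.2] : (0:ℝ) ≤ 1 - θ)]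
        refine (abs_add_le _ _).trans_eq ?_
        rw [e1, e2]
    _ ≤ θ * vT T g t δ + (1 - θ) * vT T g t δ := by
        have h2' : |g t3 - g t2| ≤ vT T g t δ := by rwa [abs_sub_comm]
        exact add_le_add (mul_le_mul_of_nonneg_left hv1 hθ.1)
          (mul_le_mul_of_nonneg_left h2' (by linarith [hθ.2]))
    _ = vT T g t δ := by ring
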